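/- arXiv:1512.01398 — 3 statements merged into one kernel-verified Lean document; each statement's English description precedes it below -/
import Mathlib

section
/- Let n be a positive natural number, λ > 0, and z ∈ ℝⁿ (Euclidean space with the standard inner product and norm). Then the point d* = (z/‖z‖)·max(‖z‖ − 1/λ, 0) when z ≠ 0, and d* = 0 when z = 0, is the unique global minimizer over d ∈ ℝⁿ of the function d ↦ ‖d‖ + (λ/2)‖d − z‖². -/
open RealInnerProductSpace

open Classical in

/-- In `ℝⁿ` (with the Euclidean norm), the vector shrinkage point
`d* = (z/‖z‖)·max(‖z‖ − 1/λ, 0)` (and `d* = 0` for `z = 0`) is the unique global minimizer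
of `d ↦ ‖d‖ + (λ/2)‖d − z‖²`. -/
theorem vector_shrink_unique_min (n : ℕ) (hn : 0 < n) (lam : ℝ) (hlam : 0 < lam)
    (z : EuclideanSpace ℝ (Fin n)) :
    ∀ d : EuclideanSpace ℝ (Fin n),
      d ≠ (if z = 0 then 0 else (max (‖z‖ - 1 / lam) 0 / ‖z‖) • z) →
      ‖(if z = 0 then 0 else (max (‖z‖ - 1 / lam) 0 / ‖z‖) • z : EuclideanSpace ℝ (Fin n))‖ +
          (lam / 2) *
            ‖(if z = 0 then 0 else (max (‖z‖ - 1 / lam) 0 / ‖z‖) • z : EuclideanSpace ℝ (Fin n))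
              - z‖ ^ 2 <
        ‖d‖ + (lam / 2) * ‖d - z‖ ^ 2 := by
  intro d hd
  by_cases hz : z = 0
  · subst hz
    simp only [eq_self_iff_true, if_true] at hd ⊢
    have h1 : 0 < ‖d‖ := norm_pos_iff.mpr hd
    simp only [norm_zero, sub_zero, zero_sub, norm_neg]
    have h2 : (0:ℝ) ≤ lam / 2 * ‖d‖ ^ 2 := by positivity
    linarith
  · simp only [if_neg hz] at hd ⊢
    set N := ‖z‖ with hN
    have hNpos : 0 < N := norm_pos_iff.mpr hz
    set t := max (N - 1/lam) 0 with ht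
    have htnn : 0 ≤ t := le_max_right _ _
    have hds : ‖(t/N) • z‖ = t := by
      rw [norm_smul, Real.norm_eq_abs, abs_of_nonneg (by positivity), ← hN,
        div_mul_cancel₀ _ hNpos.ne']
    have hexp : ∀ x : EuclideanSpace ℝ (Fin n),
        ‖x - z‖ ^ 2 = ‖x‖ ^ 2 - 2 * (inner ℝ x z : ℝ) + N ^ 2 := fun x => norm_sub_sq_real x z
    rw [hexp, hexp, hds, real_inner_smul_left, real_inner_self_eq_norm_sq, ← hN]
    have hTN : t / N * N ^ 2 = t * N := by field_simp
    rw [hTN]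
    set r := ‖d‖ with hr
    have hrnn : 0 ≤ r := norm_nonneg d
    set s := (inner ℝ d z : ℝ) with hs
    have hcs : s ≤ r * N := real_inner_le_norm d z
    have htfact : (t = N - 1/lam ∧ 1/lam ≤ N) ∨ (t = 0 ∧ N ≤ 1/lam) := by
      rcases le_total (N - 1/lam) 0 with h | h
      · right; exact ⟨max_eq_right h, by linarith⟩
      · left; exact ⟨max_eq_left h, by linarith⟩
    rcases eq_or_lt_of_le hcs with heq | hlt
    · -- equality in Cauchy–Schwarz: d is a nonneg multiple of z
      have heq' : (inner ℝ d z : ℝ) = ‖d‖ * ‖z‖ := by rw [← hs, heq, hr, hN]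
      have hpar : N • d = r • z := inner_eq_norm_mul_iff_real.mp heq'
      have hdz : d = (r / N) • z := by
        have h3 := congrArg (fun v : EuclideanSpace ℝ (Fin n) => (N⁻¹ : ℝ) • v) hpar
        simpa [smul_smul, inv_mul_cancel₀ hNpos.ne', div_eq_inv_mul] using h3
      have hrt : r ≠ t := by
        intro hrt
        exact hd (by rw [hdz, hrt])
      have hsq : 0 < (r - t) ^ 2 :=
        lt_of_le_of_ne (sq_nonneg _) (Ne.symm (pow_ne_zero 2 (sub_ne_zero.mpr hrt)))
      rcases htfact with ⟨h1, h2⟩ | ⟨h1, h2⟩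
      · have h1' : lam * t = lam * N - 1 := by rw [h1]; field_simp
        nlinarith [heq, hsq, h1', sq_nonneg (r - t)]
      · have hr0 : r ≠ 0 := by rw [h1] at hrt; exact hrt
        have hrpos : 0 < r := lt_of_le_of_ne hrnn (Ne.symm hr0)
        have h2' : N * lam ≤ 1 := (le_div_iff₀ hlam).mp h2
        rw [h1]
        nlinarith [heq, hrpos, h2', mul_nonneg hrnn (sub_nonneg.mpr h2'),
          mul_pos hlam (mul_pos hrpos hrpos)]
    · rcases htfact with ⟨h1, h2⟩ | ⟨h1, h2⟩
      · have h1' : lam * t = lam * N - 1 := by rw [h1]; field_simp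
        nlinarith [mul_lt_mul_of_pos_left hlt hlam, h1', sq_nonneg (r - t)]
      · have h2' : N * lam ≤ 1 := (le_div_iff₀ hlam).mp h2
        rw [h1]
        nlinarith [mul_lt_mul_of_pos_left hlt hlam, h2', sq_nonneg r,
          mul_nonneg hrnn (sub_nonneg.mpr h2'), mul_nonneg hlam.le (sq_nonneg r)]
end

section
/- Let θ > 0, λ > 0, u ∈ ℝ², a ∈ ℝ² with a ≠ 0, and c ∈ ℝ, and set ρ(v) = ⟨a, v⟩ + c for v ∈ ℝ². Then the unique global minimizer over v ∈ ℝ² of the function v ↦ (1/(2θ))‖u − v‖² + λ|ρ(v)| is v* = u + λθ a if ρ(u) < −λθ‖a‖²; v* = u − λθ a if ρ(u) > λθ‖a‖²; and v* = u − (ρ(u)/‖a‖²) a if |ρ(u)| ≤ λθ‖a‖². In particular v* = u + TH(u), where TH is the thresholding operator defined by these three cases. -/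
open RealInnerProductSpace

/-- The thresholding operator `TH` of the TV-L1 optical flow algorithm, for the affine
residual `ρ(v) = ⟨a, v⟩ + c`. -/
noncomputable def TH (θ lam : ℝ) (a : EuclideanSpace ℝ (Fin 2)) (c : ℝ)
    (u : EuclideanSpace ℝ (Fin 2)) : EuclideanSpace ℝ (Fin 2) :=
  if ⟪a, u⟫ + c < -(lam * θ) * ‖a‖ ^ 2 then (lam * θ) • a
  else if lam * θ * ‖a‖ ^ 2 < ⟪a, u⟫ + c then -((lam * θ) • a)
  else -(((⟪a, u⟫ + c) / ‖a‖ ^ 2) • a)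

/-- For `θ, λ > 0`, `a ≠ 0` and the affine residual `ρ(v) = ⟨a, v⟩ + c`, the unique global
minimizer of `v ↦ (1/(2θ))‖u − v‖² + λ|ρ(v)|` over `v ∈ ℝ²` is `v* = u + TH(u)`, where
`TH` is the three-case thresholding operator. -/
theorem thresholding_unique_min (θ lam : ℝ) (hθ : 0 < θ) (hlam : 0 < lam)
    (u a : EuclideanSpace ℝ (Fin 2)) (ha : a ≠ 0) (c : ℝ) :
    ∀ v : EuclideanSpace ℝ (Fin 2), v ≠ u + TH θ lam a c u →
      (1 / (2 * θ)) * ‖u - (u + TH θ lam a c u)‖ ^ 2 +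
          lam * |⟪a, u + TH θ lam a c u⟫ + c| <
        (1 / (2 * θ)) * ‖u - v‖ ^ 2 + lam * |⟪a, v⟫ + c| := by
  intro v hv
  have hna : (0:ℝ) < ‖a‖ := norm_pos_iff.mpr ha
  have hn : (0:ℝ) < ‖a‖ ^ 2 := by positivity
  set w := v - (u + TH θ lam a c u) with hwdef
  have hw : w ≠ 0 := sub_ne_zero.mpr hv
  have hW : (0:ℝ) < ‖w‖ ^ 2 := by
    have := norm_pos_iff.mpr hw
    positivity
  have hv' : v = (u + TH θ lam a c u) + w := by rw [hwdef]; abel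
  have huv : u - v = -(TH θ lam a c u + w) := by rw [hv']; abel
  have e1 : u - (u + TH θ lam a c u) = -(TH θ lam a c u) := by abel
  rw [huv, e1, norm_neg, norm_neg, norm_add_sq_real, hv']
  simp only [inner_add_right]
  clear hwdef hv' huv e1 hv
  unfold TH
  split_ifs with h1 h2
  all_goals simp only [real_inner_smul_right, real_inner_smul_left,
    real_inner_self_eq_norm_sq, norm_smul, mul_pow, sq_abs, inner_neg_neg, inner_neg_left,
    inner_neg_right, norm_neg, Real.norm_eq_abs]
  all_goals have hp : (0:ℝ) < 1 / (2 * θ) := by positivity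
  · -- case ρ(u) < -λθ‖a‖²
    have hA : ⟪a, u⟫ + lam * θ * ‖a‖ ^ 2 + c < 0 := by nlinarith
    rw [abs_of_neg hA]
    have key : 1 / (2 * θ) * (2 * (lam * θ * ⟪a, w⟫)) = lam * ⟪a, w⟫ := by
      field_simp
    have hb : lam * -(⟪a, u⟫ + lam * θ * ‖a‖ ^ 2 + ⟪a, w⟫ + c) ≤
        lam * |⟪a, u⟫ + lam * θ * ‖a‖ ^ 2 + ⟪a, w⟫ + c| :=
      mul_le_mul_of_nonneg_left (neg_le_abs _) hlam.le
    nlinarith [mul_pos hp hW]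
  · -- case λθ‖a‖² < ρ(u)
    have hA : 0 < ⟪a, u⟫ + -(lam * θ * ‖a‖ ^ 2) + c := by nlinarith
    rw [abs_of_pos hA]
    have key : 1 / (2 * θ) * (2 * -(lam * θ * ⟪a, w⟫)) = -(lam * ⟪a, w⟫) := by
      field_simp
    have hb : lam * (⟪a, u⟫ + -(lam * θ * ‖a‖ ^ 2) + ⟪a, w⟫ + c) ≤
        lam * |⟪a, u⟫ + -(lam * θ * ‖a‖ ^ 2) + ⟪a, w⟫ + c| :=
      mul_le_mul_of_nonneg_left (le_abs_self _) hlam.le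
    nlinarith [mul_pos hp hW]
  · -- case |ρ(u)| ≤ λθ‖a‖²
    push_neg at h1 h2
    have hc : (⟪a, u⟫ + c) / ‖a‖ ^ 2 * ‖a‖ ^ 2 = ⟪a, u⟫ + c :=
      div_mul_cancel₀ _ hn.ne'
    rw [hc]
    have e0 : ⟪a, u⟫ + -(⟪a, u⟫ + c) + c = 0 := by ring
    have e2 : ⟪a, u⟫ + -(⟪a, u⟫ + c) + ⟪a, w⟫ + c = ⟪a, w⟫ := by ring
    rw [e0, e2, abs_zero]
    have habs : |(⟪a, u⟫ + c) / ‖a‖ ^ 2| ≤ lam * θ := by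
      rw [abs_div, abs_of_pos hn, div_le_iff₀ hn]
      rw [abs_le]
      constructor <;> nlinarith
    have hb : (⟪a, u⟫ + c) / ‖a‖ ^ 2 * ⟪a, w⟫ ≤ lam * θ * |⟪a, w⟫| := by
      calc (⟪a, u⟫ + c) / ‖a‖ ^ 2 * ⟪a, w⟫ ≤ |(⟪a, u⟫ + c) / ‖a‖ ^ 2 * ⟪a, w⟫| :=
            le_abs_self _
        _ = |(⟪a, u⟫ + c) / ‖a‖ ^ 2| * |⟪a, w⟫| := abs_mul _ _
        _ ≤ lam * θ * |⟪a, w⟫| := mul_le_mul_of_nonneg_right habs (abs_nonneg _)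
    have key : 1 / (2 * θ) * (2 * (lam * θ * |⟪a, w⟫|)) = lam * |⟪a, w⟫| := by
      field_simp
    nlinarith [mul_le_mul_of_nonneg_left hb hp.le, mul_pos hp hW, abs_nonneg (⟪a, w⟫ : ℝ)]
end

section
/- Let Ω ⊆ ℝ² be open and bounded, θ > 0, λ > 0, v : ℝ² → ℝ continuous, and d, b : ℝ² → ℝ² continuously differentiable. For continuously differentiable w : ℝ² → ℝ define J(w) = ∫_Ω [ (1/(2θ))(w(x) − v(x))² + (λ/2)‖d(x) − b(x) − ∇w(x)‖² ] dx. If u : ℝ² → ℝ is twice continuously differentiable and satisfies J(u) ≤ J(w) for every continuously differentiable w : ℝ² → ℝ, then at every point x ∈ Ω the Euler–Lagrange equation holds: (1/θ)u(x) − λΔu(x) = (1/θ)v(x) − λ div(d − b)(x), where Δu = ∂²u/∂x₁² + ∂²u/∂x₂² and div(d − b) = ∂(d₁ − b₁)/∂x₁ + ∂(d₂ − b₂)/∂x₂. -/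
open MeasureTheory

open Set

local notation "E2" => EuclideanSpace ℝ (Fin 2)



lemma divergence_eq_zero (V : Fin 2 → E2 → ℝ)
    (hV : ∀ j, ContDiff ℝ 1 (V j)) (hsupp : ∀ j, HasCompactSupport (V j)) :
    ∫ x : E2, ∑ j, fderiv ℝ (V j) x (EuclideanSpace.single j 1) = 0 := by
  set eqv := EuclideanSpace.equiv (Fin 2) ℝ with heqv
  set W : Fin 2 → (Fin 2 → ℝ) → ℝ := fun j y => V j (eqv.symm y) with hW
  have hWf : ∀ j y, HasFDerivAt (W j)
      ((fderiv ℝ (V j) (eqv.symm y)).comp (eqv.symm.toContinuousLinearMap)) y := by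
    intro j y
    exact (((hV j).differentiable one_ne_zero (eqv.symm y)).hasFDerivAt).comp y (eqv.symm.hasFDerivAt)
  have hWc : ∀ j, ContDiff ℝ 1 (W j) := fun j => (hV j).comp (eqv.symm).contDiff
  have hfd : ∀ j y, fderiv ℝ (W j) y (Pi.single j 1) =
      fderiv ℝ (V j) (eqv.symm y) (EuclideanSpace.single j 1) := by
    intro j y
    rw [(hWf j y).fderiv]; rfl
  have hWs : ∀ j, HasCompactSupport (W j) := fun j =>
    (hsupp j).comp_homeomorph (eqv.symm).toHomeomorph
  obtain ⟨R, hR0, hRK⟩ : ∃ R, 0 < R ∧ (⋃ j, tsupport (W j)) ⊆ Metric.ball 0 R := by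
    obtain ⟨R, hR, hsub⟩ := ((isCompact_iUnion (fun j => (hWs j))).isBounded).subset_ball_lt 0 0
    exact ⟨R, hR, hsub⟩
  have hnot : ∀ (z : Fin 2 → ℝ) (j : Fin 2), R ≤ |z j| → ∀ i, W i z = 0 := by
    intro z j hz i
    apply image_eq_zero_of_notMem_tsupport
    intro hmem
    have : ‖z‖ < R := by simpa using hRK (mem_iUnion.2 ⟨i, hmem⟩)
    exact absurd (le_trans hz (norm_le_pi_norm z j)) (not_le.2 this)
  set a : Fin 2 → ℝ := fun _ => -R with ha
  set bb : Fin 2 → ℝ := fun _ => R with hbb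
  have hle : a ≤ bb := fun i => by simp [ha, hbb]; linarith
  have hIeq : (fun x => ∑ i, ((fderiv ℝ (V i) (eqv.symm x)).comp (eqv.symm.toContinuousLinearMap)) (Pi.single i 1 : Fin 2 → ℝ))
      = fun x => ∑ i, fderiv ℝ (W i) x (Pi.single i 1) := by
    funext x
    exact Finset.sum_congr rfl fun i _ => by rw [(hWf i x).fderiv]
  have hcont : Continuous (fun x => ∑ i, fderiv ℝ (W i) x (Pi.single i 1 : Fin 2 → ℝ)) := by
    apply continuous_finset_sum
    intro i _
    exact (ContinuousLinearMap.apply ℝ ℝ (Pi.single i 1 : Fin 2 → ℝ)).continuous.comp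
      ((hWc i).continuous_fderiv one_ne_zero)
  have hdiv := MeasureTheory.integral_divergence_of_hasFDerivAt_off_countable' a bb hle
    W (fun j y => (fderiv ℝ (V j) (eqv.symm y)).comp (eqv.symm.toContinuousLinearMap))
    ∅ countable_empty
    (fun i => ((hWc i).continuous).continuousOn)
    (fun x _ i => hWf i x)
    (by rw [show (fun x => ∑ i, ((fun j y => (fderiv ℝ (V j) (eqv.symm y)).comp (eqv.symm.toContinuousLinearMap)) i x) (Pi.single i 1 : Fin 2 → ℝ)) = _ from hIeq]
        exact (hcont.continuousOn).integrableOn_compact isCompact_Icc)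
  have hfaces : ∀ (i : Fin 2) (c : ℝ), R ≤ |c| →
      (∫ (x : Fin 1 → ℝ) in Icc (a ∘ i.succAbove) (bb ∘ i.succAbove), W i (i.insertNth c x)) = 0 := by
    intro i c hc
    have h0 : ∀ x : Fin 1 → ℝ, W i (i.insertNth c x) = 0 := fun x =>
      hnot _ i (by rw [Fin.insertNth_apply_same]; exact hc) i
    simp [h0]
  rw [Finset.sum_eq_zero (fun i _ => by
      rw [hfaces i R (le_of_eq (abs_of_pos hR0).symm),
        hfaces i (-R) (by rw [abs_neg, abs_of_pos hR0]), sub_self])] at hdiv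
  rw [show (fun x => ∑ i, ((fun j y => (fderiv ℝ (V j) (eqv.symm y)).comp (eqv.symm.toContinuousLinearMap)) i x) (Pi.single i 1 : Fin 2 → ℝ)) = _ from hIeq] at hdiv
  -- extend integral from box to whole space
  have hout : ∀ x ∉ Icc a bb, ∑ i, fderiv ℝ (W i) x (Pi.single i 1 : Fin 2 → ℝ) = 0 := by
    intro x hx
    have hxout : ∃ j, R ≤ |x j| := by
      by_contra h
      push_neg at h
      refine hx (mem_Icc.2 ⟨fun j => ?_, fun j => ?_⟩) <;>
        · have := abs_lt.1 (h j)
          simp only [ha, hbb]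
          linarith [this.1, this.2]
    obtain ⟨j, hj⟩ := hxout
    refine Finset.sum_eq_zero fun i _ => ?_
    have hxnot : x ∉ tsupport (W i) := by
      intro hmem
      have : ‖x‖ < R := by simpa using hRK (mem_iUnion.2 ⟨i, hmem⟩)
      exact absurd (le_trans hj (norm_le_pi_norm x j)) (not_le.2 this)
    have : fderiv ℝ (W i) x = 0 := by
      by_contra hne
      exact hxnot (support_fderiv_subset ℝ (Function.mem_support.2 hne))
    simp [this]
  rw [setIntegral_eq_integral_of_forall_compl_eq_zero hout] at hdiv
  -- transfer to EuclideanSpace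
  have htrans := ((EuclideanSpace.volume_preserving_symm_measurableEquiv_toLp (Fin 2)).symm).integral_comp
    (MeasurableEquiv.toLp 2 (Fin 2 → ℝ)).symm.symm.measurableEmbedding
    (fun x : E2 => ∑ j, fderiv ℝ (V j) x (EuclideanSpace.single j 1))
  rw [← htrans]
  rw [show (fun y : Fin 2 → ℝ => ∑ j, fderiv ℝ (V j) ((MeasurableEquiv.toLp 2 (Fin 2 → ℝ)).symm.symm y) (EuclideanSpace.single j 1))
      = fun y => ∑ i, fderiv ℝ (W i) y (Pi.single i 1) from funext fun y =>
        Finset.sum_congr rfl fun j _ => (hfd j y).symm]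
  exact hdiv


lemma grad_coord (f : E2 → ℝ) (x : E2) (i : Fin 2) :
    gradient f x i = fderiv ℝ f x (EuclideanSpace.single i 1) := by
  have h1 : (inner ℝ (gradient f x) (EuclideanSpace.single i (1:ℝ)) : ℝ)
      = fderiv ℝ f x (EuclideanSpace.single i 1) := InnerProductSpace.toDual_symm_apply
  rw [← h1, real_inner_comm, EuclideanSpace.inner_single_left]
  simp

lemma inner_grad (f : E2 → ℝ) (x w : E2) :
    (inner ℝ (gradient f x) w : ℝ) = fderiv ℝ f x w := InnerProductSpace.toDual_symm_apply

lemma cont_grad {f : E2 → ℝ} (hf : ContDiff ℝ 1 f) : Continuous (gradient f) :=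
  (InnerProductSpace.toDual ℝ E2).symm.continuous.comp (hf.continuous_fderiv one_ne_zero)

lemma grad_add_smul {f g : E2 → ℝ} (hf : Differentiable ℝ f) (hg : Differentiable ℝ g)
    (t : ℝ) (x : E2) :
    gradient (fun y => f y + t * g y) x = gradient f x + t • gradient g x := by
  simp only [gradient]
  rw [fderiv_fun_add (hf x) ((hg x).const_mul t), fderiv_const_mul (hg x), map_add, _root_.map_smul]


set_option maxHeartbeats 1000000 in
/-- Strong Euler–Lagrange equation for the split Bregman `u`-subproblem: if the `C²`
function `u` minimizes `J(w) = ∫_Ω [(1/(2θ))(w − v)² + (λ/2)‖d − b − ∇w‖²]` over all `C¹`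
functions `w`, then at every point of `Ω`,
`(1/θ)u − λΔu = (1/θ)v − λ div(d − b)`, where the Laplacian and divergence are written in
terms of directional (partial) derivatives along the standard basis vectors. -/
theorem strong_euler_lagrange
    (Ω : Set (EuclideanSpace ℝ (Fin 2))) (hΩo : IsOpen Ω) (hΩb : Bornology.IsBounded Ω)
    (θ lam : ℝ) (hθ : 0 < θ) (hlam : 0 < lam)
    (v : EuclideanSpace ℝ (Fin 2) → ℝ) (hv : Continuous v)
    (d b : EuclideanSpace ℝ (Fin 2) → EuclideanSpace ℝ (Fin 2))
    (hd : ContDiff ℝ 1 d) (hb : ContDiff ℝ 1 b)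
    (u : EuclideanSpace ℝ (Fin 2) → ℝ) (hu : ContDiff ℝ 2 u)
    (hmin : ∀ w : EuclideanSpace ℝ (Fin 2) → ℝ, ContDiff ℝ 1 w →
      (∫ x in Ω, ((1 / (2 * θ)) * (u x - v x) ^ 2 +
          (lam / 2) * ‖d x - b x - gradient u x‖ ^ 2)) ≤
        ∫ x in Ω, ((1 / (2 * θ)) * (w x - v x) ^ 2 +
          (lam / 2) * ‖d x - b x - gradient w x‖ ^ 2)) :
    ∀ x ∈ Ω,
      (1 / θ) * u x -
          lam * (∑ i : Fin 2,
            fderiv ℝ (fun y => fderiv ℝ u y (EuclideanSpace.single i (1 : ℝ))) x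
              (EuclideanSpace.single i (1 : ℝ))) =
        (1 / θ) * v x -
          lam * (∑ i : Fin 2,
            fderiv ℝ (fun y => d y i - b y i) x (EuclideanSpace.single i (1 : ℝ))) := by
  -- notation
  set F : Fin 2 → E2 → ℝ := fun i y => d y i - b y i - fderiv ℝ u y (EuclideanSpace.single i (1:ℝ)) with hF
  set DF : E2 → ℝ := fun x => ∑ i, fderiv ℝ (F i) x (EuclideanSpace.single i (1:ℝ)) with hDF
  set G : E2 → ℝ := fun x => (1/θ) * (u x - v x) + lam * DF x with hG
  -- basic regularity facts
  have hu1 : ContDiff ℝ 1 u := hu.of_le one_le_two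
  have hudiff : Differentiable ℝ u := hu1.differentiable one_ne_zero
  have hproj : ∀ i : Fin 2, ContDiff ℝ 1 (fun y => d y i - b y i) := by
    intro i
    exact ((EuclideanSpace.proj (𝕜 := ℝ) i).contDiff.comp hd).sub
      ((EuclideanSpace.proj (𝕜 := ℝ) i).contDiff.comp hb)
  have hu2 : ∀ i : Fin 2, ContDiff ℝ 1 (fun y => fderiv ℝ u y (EuclideanSpace.single i (1:ℝ))) := by
    intro i
    exact ((ContinuousLinearMap.apply ℝ ℝ (EuclideanSpace.single i (1:ℝ))).contDiff).comp
      (hu.fderiv_right (m := 1) (by norm_num))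
  have hFc : ∀ i, ContDiff ℝ 1 (F i) := fun i => (hproj i).sub (hu2 i)
  have hgu : Continuous (gradient u) := cont_grad hu1
  have hDFc : Continuous DF := by
    apply continuous_finset_sum
    intro i _
    exact (ContinuousLinearMap.apply ℝ ℝ (EuclideanSpace.single i (1:ℝ))).continuous.comp
      ((hFc i).continuous_fderiv one_ne_zero)
  have hGc : Continuous G := by
    apply Continuous.add
    · exact continuous_const.mul ((hu1.continuous).sub hv)
    · exact continuous_const.mul hDFc
  -- integrability of continuous functions on Ω
  have hInt : ∀ f : E2 → ℝ, Continuous f → IntegrableOn f Ω := by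
    intro f hf
    exact (hf.continuousOn.integrableOn_compact
      (Metric.isCompact_of_isClosed_isBounded isClosed_closure hΩb.closure)).mono_set
      subset_closure
  -- inner product expansion
  have hFinner : ∀ (φ : E2 → ℝ) (x : E2),
      (inner ℝ (d x - b x - gradient u x) (gradient φ x) : ℝ)
        = ∑ i, F i x * fderiv ℝ φ x (EuclideanSpace.single i (1:ℝ)) := by
    intro φ x
    rw [PiLp.inner_apply]
    refine Finset.sum_congr rfl fun i _ => ?_
    simp only [RCLike.inner_apply, conj_trivial]
    have hc : (d x - b x - gradient u x) i = d x i - b x i - gradient u x i := rfl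
    rw [hc, grad_coord u x i, grad_coord φ x i]
    exact mul_comm _ _
  -- Step A : first variation vanishes
  have stepA : ∀ φ : E2 → ℝ, ContDiff ℝ 1 φ →
      ∫ x in Ω, ((1/θ) * (u x - v x) * φ x
        - lam * (inner ℝ (d x - b x - gradient u x) (gradient φ x) : ℝ)) = 0 := by
    intro φ hφ
    have hgφ : Continuous (gradient φ) := cont_grad hφ
    have hφc : Continuous φ := hφ.continuous
    have hlinc : Continuous (fun x => (1/θ) * (u x - v x) * φ x
        - lam * (inner ℝ (d x - b x - gradient u x) (gradient φ x) : ℝ)) := by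
      apply Continuous.sub
      · exact (continuous_const.mul (hu1.continuous.sub hv)).mul hφc
      · exact continuous_const.mul
          (Continuous.inner ((hd.continuous.sub hb.continuous).sub hgu) hgφ)
    have hquadc : Continuous (fun x => (1/(2*θ)) * φ x ^ 2 + (lam/2) * ‖gradient φ x‖^2) := by
      apply Continuous.add
      · exact continuous_const.mul (hφc.pow 2)
      · exact continuous_const.mul ((hgφ.norm).pow 2)
    have hbasec : Continuous (fun x => (1/(2*θ)) * (u x - v x)^2
        + (lam/2) * ‖d x - b x - gradient u x‖^2) := by
      apply Continuous.add
      · exact continuous_const.mul ((hu1.continuous.sub hv).pow 2)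
      · exact continuous_const.mul
          ((((hd.continuous.sub hb.continuous).sub hgu).norm).pow 2)
    set A := ∫ x in Ω, ((1/θ) * (u x - v x) * φ x
      - lam * (inner ℝ (d x - b x - gradient u x) (gradient φ x) : ℝ)) with hA
    set Qd := ∫ x in Ω, ((1/(2*θ)) * φ x ^ 2 + (lam/2) * ‖gradient φ x‖^2) with hQd
    have hQd0 : 0 ≤ Qd := setIntegral_nonneg hΩo.measurableSet (fun x _ => by positivity)
    have key : ∀ t : ℝ, 0 ≤ t * A + t^2 * Qd := by
      intro t
      have hw : ContDiff ℝ 1 (fun x => u x + t * φ x) := hu1.add (contDiff_const.mul hφ)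
      have hexp : ∀ x : E2, (1/(2*θ)) * ((u x + t * φ x) - v x)^2
            + (lam/2) * ‖d x - b x - gradient (fun y => u y + t * φ y) x‖^2
          = ((1/(2*θ)) * (u x - v x)^2 + (lam/2) * ‖d x - b x - gradient u x‖^2)
            + (t * ((1/θ) * (u x - v x) * φ x
                - lam * (inner ℝ (d x - b x - gradient u x) (gradient φ x):ℝ))
            + t^2 * ((1/(2*θ)) * φ x ^2 + (lam/2) * ‖gradient φ x‖^2)) := by
        intro x
        rw [grad_add_smul hudiff (hφ.differentiable one_ne_zero) t x]
        rw [show d x - b x - (gradient u x + t • gradient φ x)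
            = (d x - b x - gradient u x) - t • gradient φ x by abel]
        rw [norm_sub_sq_real, real_inner_smul_right, norm_smul]
        simp only [Real.norm_eq_abs, mul_pow, sq_abs]
        field_simp
        ring
      have hint := hmin (fun x => u x + t * φ x) hw
      have hrhs : ∫ x in Ω, ((1/(2*θ)) * ((u x + t * φ x) - v x)^2
            + (lam/2) * ‖d x - b x - gradient (fun y => u y + t * φ y) x‖^2)
          = (∫ x in Ω, ((1/(2*θ)) * (u x - v x)^2
              + (lam/2) * ‖d x - b x - gradient u x‖^2)) + (t * A + t^2 * Qd) := by
        have hi1 : IntegrableOn (fun x => t * ((1/θ) * (u x - v x) * φ x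
            - lam * (inner ℝ (d x - b x - gradient u x) (gradient φ x) : ℝ))) Ω :=
          (hInt _ hlinc).const_mul t
        have hi2 : IntegrableOn (fun x => t^2 * ((1/(2*θ)) * φ x ^ 2
            + (lam/2) * ‖gradient φ x‖^2)) Ω := (hInt _ hquadc).const_mul (t^2)
        have hi12 : IntegrableOn (fun x => t * ((1/θ) * (u x - v x) * φ x
            - lam * (inner ℝ (d x - b x - gradient u x) (gradient φ x) : ℝ))
            + t^2 * ((1/(2*θ)) * φ x ^ 2 + (lam/2) * ‖gradient φ x‖^2)) Ω := hi1.add hi2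
        rw [integral_congr_ae (Filter.Eventually.of_forall hexp)]
        rw [integral_add (hInt _ hbasec) hi12]
        rw [integral_add hi1 hi2]
        rw [integral_const_mul, integral_const_mul]
      rw [show (1:ℝ)/(2*θ) = 1/(2*θ) from rfl] at hrhs
      have : (∫ x in Ω, ((1/(2*θ)) * (u x - v x)^2
          + (lam/2) * ‖d x - b x - gradient u x‖^2))
          ≤ (∫ x in Ω, ((1/(2*θ)) * (u x - v x)^2
              + (lam/2) * ‖d x - b x - gradient u x‖^2)) + (t * A + t^2 * Qd) := by
        rw [← hrhs]
        convert hint using 2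
      linarith
    have h1 := key (-(A)/(Qd+1))
    have hs : (0:ℝ) < Qd + 1 := by linarith
    have h2 : (-(A)/(Qd+1)) * A + (-(A)/(Qd+1))^2 * Qd = -(A^2)/(Qd+1)^2 := by
      field_simp
      ring
    rw [h2] at h1
    have h3 : A^2 ≤ 0 := by
      rcases div_nonneg_iff.mp h1 with ⟨ha, _⟩ | ⟨_, hb2⟩
      · linarith
      · nlinarith [pow_pos hs 2]
    have : A = 0 := (pow_eq_zero_iff two_ne_zero).mp (le_antisymm h3 (sq_nonneg A))
    exact this
  -- Step B : integration by parts
  have stepB : ∀ φ : E2 → ℝ, ContDiff ℝ 1 φ → HasCompactSupport φ → tsupport φ ⊆ Ω →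
      ∫ x in Ω, ((inner ℝ (d x - b x - gradient u x) (gradient φ x) : ℝ) + DF x * φ x) = 0 := by
    intro φ hφ hφs hφΩ
    set V : Fin 2 → E2 → ℝ := fun i x => F i x * φ x with hV
    have hVc : ∀ i, ContDiff ℝ 1 (V i) := fun i => (hFc i).mul hφ
    have hVs : ∀ i, HasCompactSupport (V i) := fun i => hφs.mul_left
    have hdV : ∀ x : E2, ∑ j, fderiv ℝ (V j) x (EuclideanSpace.single j 1)
        = (inner ℝ (d x - b x - gradient u x) (gradient φ x) : ℝ) + DF x * φ x := by
      intro x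
      have hterm : ∀ i : Fin 2, fderiv ℝ (V i) x (EuclideanSpace.single i (1:ℝ))
          = F i x * fderiv ℝ φ x (EuclideanSpace.single i (1:ℝ)) + fderiv ℝ (F i) x (EuclideanSpace.single i (1:ℝ)) * φ x := by
        intro i
        have h := (((hFc i).differentiable one_ne_zero x).hasFDerivAt.fun_mul
          ((hφ.differentiable one_ne_zero x).hasFDerivAt)).fderiv
        rw [hV]
        rw [show (fun i (x : E2) => F i x * φ x) i = fun y => F i y * φ y from rfl, h]
        simp only [ContinuousLinearMap.add_apply, ContinuousLinearMap.smul_apply,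
          smul_eq_mul]
        ring
      rw [Finset.sum_congr rfl fun i _ => hterm i, Finset.sum_add_distrib,
        ← hFinner φ x, hDF]
      rw [Finset.sum_mul]
    have h0 := divergence_eq_zero V hVc hVs
    rw [show (fun x : E2 => ∑ j, fderiv ℝ (V j) x (EuclideanSpace.single j 1))
        = fun x => (inner ℝ (d x - b x - gradient u x) (gradient φ x) : ℝ) + DF x * φ x
        from funext hdV] at h0
    rw [setIntegral_eq_integral_of_forall_compl_eq_zero (fun x hx => ?_), h0]
    have hxn : x ∉ tsupport φ := fun h => hx (hφΩ h)
    have h1 : φ x = 0 := image_eq_zero_of_notMem_tsupport hxn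
    have h2 : gradient φ x = 0 := by
      have : fderiv ℝ φ x = 0 := by
        by_contra hne
        exact hxn (support_fderiv_subset ℝ (Function.mem_support.2 hne))
      simp [gradient, this]
    rw [h1, h2, inner_zero_right, mul_zero, add_zero]
  -- Step AB : combined weak form
  have stepAB : ∀ φ : E2 → ℝ, ContDiff ℝ 1 φ → HasCompactSupport φ → tsupport φ ⊆ Ω →
      ∫ x in Ω, G x * φ x = 0 := by
    intro φ hφ hφs hφΩ
    have hA := stepA φ hφ
    have hB := stepB φ hφ hφs hφΩ
    have hgφ : Continuous (gradient φ) := cont_grad hφ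
    have hφc : Continuous φ := hφ.continuous
    have hc1 : Continuous (fun x => (1/θ) * (u x - v x) * φ x
        - lam * (inner ℝ (d x - b x - gradient u x) (gradient φ x) : ℝ)) := by
      apply Continuous.sub
      · exact (continuous_const.mul (hu1.continuous.sub hv)).mul hφc
      · exact continuous_const.mul
          (Continuous.inner ((hd.continuous.sub hb.continuous).sub hgu) hgφ)
    have hc2 : Continuous (fun x =>
        (inner ℝ (d x - b x - gradient u x) (gradient φ x) : ℝ) + DF x * φ x) := by
      apply Continuous.add
      · exact Continuous.inner ((hd.continuous.sub hb.continuous).sub hgu) hgφ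
      · exact hDFc.mul hφc
    have hsum : (fun x => G x * φ x) = fun x =>
        ((1/θ) * (u x - v x) * φ x
          - lam * (inner ℝ (d x - b x - gradient u x) (gradient φ x) : ℝ))
        + lam * ((inner ℝ (d x - b x - gradient u x) (gradient φ x) : ℝ) + DF x * φ x) :=
      funext fun x => by rw [hG]; ring
    have hi2 : IntegrableOn (fun x => lam *
        ((inner ℝ (d x - b x - gradient u x) (gradient φ x) : ℝ) + DF x * φ x)) Ω :=
      (hInt _ hc2).const_mul lam
    rw [hsum, integral_add (hInt _ hc1) hi2, hA, integral_const_mul, hB]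
    ring
  -- Step C : fundamental lemma of the calculus of variations
  have aux : ∀ H : E2 → ℝ, Continuous H →
      (∀ φ : E2 → ℝ, ContDiff ℝ 1 φ → HasCompactSupport φ → tsupport φ ⊆ Ω →
        ∫ x in Ω, H x * φ x = 0) → ∀ y ∈ Ω, H y ≤ 0 := by
    intro H hH hzero y hy
    by_contra hpos
    push_neg at hpos
    have hSopen : IsOpen {x : E2 | H y / 2 < H x} := isOpen_lt continuous_const hH
    have hnhds : Ω ∩ {x : E2 | H y / 2 < H x} ∈ nhds y :=
      Filter.inter_mem (hΩo.mem_nhds hy) (hSopen.mem_nhds (by simp; linarith))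
    obtain ⟨r, hr0, hball⟩ := Metric.mem_nhds_iff.1 hnhds
    set φb : ContDiffBump y := ⟨r/4, r/2, by positivity, by linarith⟩ with hφb
    have hts : tsupport ⇑φb = Metric.closedBall y (r/2) := φb.tsupport_eq
    have hcbsub : Metric.closedBall y (r/2) ⊆ Ω ∩ {x : E2 | H y / 2 < H x} := by
      intro z hz
      exact hball (lt_of_le_of_lt (Metric.mem_closedBall.1 hz) (by linarith))
    have htsΩ : tsupport ⇑φb ⊆ Ω := by
      rw [hts]; exact fun z hz => (hcbsub hz).1
    have h0 := hzero ⇑φb φb.contDiff φb.hasCompactSupport htsΩ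
    have hnonneg : ∀ x ∈ Ω, 0 ≤ H x * φb x := by
      intro x hxΩ
      by_cases hxs : x ∈ tsupport ⇑φb
      · have hx2 := hcbsub (hts ▸ hxs)
        have : 0 < H x := lt_trans (by linarith) hx2.2
        exact mul_nonneg this.le (φb.nonneg' x)
      · rw [image_eq_zero_of_notMem_tsupport hxs, mul_zero]
    have hICB : Metric.closedBall y (r/4) ⊆ Ω :=
      subset_trans (Metric.closedBall_subset_closedBall (by linarith))
        (fun z hz => (hcbsub hz).1)
    have hmono : ∫ x in Metric.closedBall y (r/4), H x * φb x ≤ ∫ x in Ω, H x * φb x := by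
      apply setIntegral_mono_set (hInt _ (hH.mul φb.continuous))
        ((ae_restrict_iff' hΩo.measurableSet).2 (ae_of_all _ hnonneg))
        (HasSubset.Subset.eventuallyLE hICB)
    have hlow : (H y / 2) * (volume (Metric.closedBall y (r/4))).toReal
        ≤ ∫ x in Metric.closedBall y (r/4), H x * φb x := by
      rw [show H y / 2 * (volume (Metric.closedBall y (r/4))).toReal
          = volume.real (Metric.closedBall y (r/4)) • (H y / 2) by rw [smul_eq_mul, mul_comm]; rfl]
      apply setIntegral_ge_of_const_le Metric.isClosed_closedBall.measurableSet
        (measure_closedBall_lt_top).ne (fun x hx => ?_)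
        ((hInt _ (hH.mul φb.continuous)).mono_set hICB)
      have h1 : φb x = 1 := φb.one_of_mem_closedBall hx
      have hx2 := hcbsub (Metric.closedBall_subset_closedBall (by linarith) hx)
      rw [Pi.mul_apply, h1, mul_one]
      exact hx2.2.le
    have hvol : 0 < (volume (Metric.closedBall y (r/4))).toReal :=
      ENNReal.toReal_pos (Metric.measure_closedBall_pos volume y (by positivity)).ne'
        measure_closedBall_lt_top.ne
    rw [h0] at hmono
    nlinarith [hlow, hmono, hvol, hpos]
  have hG0 : ∀ y ∈ Ω, G y = 0 := by
    intro y hy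
    refine le_antisymm (aux G hGc stepAB y hy) ?_
    have := aux (fun x => -G x) (hGc.neg) (fun φ h1 h2 h3 => by
      have := stepAB φ h1 h2 h3
      rw [show (fun x => -G x * φ x) = fun x => -(G x * φ x) from funext fun x => by ring,
        integral_neg, this, neg_zero]) y hy
    have h2 : -G y ≤ 0 := this
    linarith
  -- Step D : conclusion
  intro x hx
  have hgx : 1/θ * (u x - v x) + lam * DF x = 0 := hG0 x hx
  have hsplit : ∀ i : Fin 2, fderiv ℝ (F i) x (EuclideanSpace.single i (1:ℝ))
      = fderiv ℝ (fun y => d y i - b y i) x (EuclideanSpace.single i (1:ℝ))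
        - fderiv ℝ (fun y => fderiv ℝ u y (EuclideanSpace.single i (1:ℝ))) x (EuclideanSpace.single i (1:ℝ)) := by
    intro i
    rw [hF]
    rw [fderiv_fun_sub (((hproj i).differentiable one_ne_zero) x) (((hu2 i).differentiable one_ne_zero) x)]
    simp
  have : DF x = (∑ i, fderiv ℝ (fun y => d y i - b y i) x (EuclideanSpace.single i (1:ℝ)))
      - ∑ i, fderiv ℝ (fun y => fderiv ℝ u y (EuclideanSpace.single i (1:ℝ))) x (EuclideanSpace.single i (1:ℝ)) := by
    rw [hDF]
    simp only [hsplit]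
    rw [Finset.sum_sub_distrib]
  rw [this] at hgx
  linarith
end
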